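/- Let n be even, let f₁ ∈ F₂[x] be a monic polynomial of degree r < n dividing xⁿ−1 in F₂[x], and let C ⊆ R̃ⁿ be the skew cyclic code generated by v·f₁ (coefficients of f₁ multiplied by v, embedded F₂ ↪ R̃). If the constant vector (v, v, …, v) belongs to C and f₁ is self-reciprocal, then C is reverse-complement. -/

import Mathlib

/-- The ring `R̃ = F₂ + vF₂` with `v² = v`, realized as `F₂ × F₂` with `v = (1, 0)`. -/
abbrev Rt : Type := ZMod 2 × ZMod 2

/-- The element `v = (1, 0)` of `R̃`. -/
def vv : Rt := (1, 0)

/-- The ring automorphism `θ` of order `2` of `R̃` (it swaps `v` and `v + 1`). -/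
def theta (a : Rt) : Rt := (a.2, a.1)

/-- The `θ`-twisted cyclic shift `σ(c₀, …, c_{n-1}) = (θ(c_{n-1}), θ(c₀), …, θ(c_{n-2}))`. -/
def sshift {n : ℕ} (c : Fin n → Rt) : Fin n → Rt :=
  fun j => theta (c ⟨(j.val + (n - 1)) % n, Nat.mod_lt _ j.pos⟩)

/-- Reverse-complement of a vector: `(c₀, …, c_{n-1}) ↦ (ĉ_{n-1}, …, ĉ₀)` with `x̂ = x + v`. -/
def rcomp {n : ℕ} (c : Fin n → Rt) : Fin n → Rt := fun j => c j.rev + vv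

/-- The skew cyclic code generated by a vector `f`: the `R̃`-span of `{σʲ(f) : 0 ≤ j ≤ n-1}`. -/
def skewSpan {n : ℕ} (f : Fin n → Rt) : Submodule Rt (Fin n → Rt) :=
  Submodule.span Rt (Set.range fun j : Fin n => sshift^[j.val] f)

/-- The skew cyclic code generated by two vectors `f, g`:
the `R̃`-span of `{σʲ(f), σʲ(g) : 0 ≤ j ≤ n-1}`. -/
def skewSpan₂ {n : ℕ} (f g : Fin n → Rt) : Submodule Rt (Fin n → Rt) :=
  Submodule.span Rt
    (Set.range (fun j : Fin n => sshift^[j.val] f) ∪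
      Set.range (fun j : Fin n => sshift^[j.val] g))

open Polynomial

/-- The coefficient vector in `R̃ⁿ` of `v · f₁` for a binary polynomial `f₁`. -/
noncomputable def vPoly (n : ℕ) (f₁ : (ZMod 2)[X]) : Fin n → Rt :=
  fun j => vv * algebraMap (ZMod 2) Rt (f₁.coeff j.val)

set_option linter.unusedSectionVars false
set_option linter.unusedVariables false

open Finset
open scoped Fin.NatCast Fin.CommRing

lemma two_eq_zero_poly : (2 : (ZMod 2)[X]) = 0 := by
  have := CharP.cast_eq_zero ((ZMod 2)[X]) 2
  exact_mod_cast this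

lemma X_sub_one_ne_zero : ((X : (ZMod 2)[X]) - 1) ≠ 0 := by
  intro h
  have h0 : ((X : (ZMod 2)[X]) - 1).eval 0 = 0 := by rw [h]; simp
  simp only [eval_sub, eval_X, eval_one, zero_sub] at h0
  exact one_ne_zero (neg_eq_zero.mp h0)

lemma reverse_X_sub_one_pow (c : ℕ) :
    (((X : (ZMod 2)[X]) - 1) ^ c).reverse = ((X : (ZMod 2)[X]) - 1) ^ c := by
  have hX1 : ((X : (ZMod 2)[X]) - 1).reverse = X - 1 := by
    have h : (X : (ZMod 2)[X]) - 1 = X ^ 1 + X ^ 0 := by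
      linear_combination -two_eq_zero_poly
    rw [h]
    unfold Polynomial.reverse
    have hdeg : ((X : (ZMod 2)[X]) ^ 1 + X ^ 0).natDegree = 1 := by
      have : ((X : (ZMod 2)[X]) ^ 1 + X ^ 0) = X + C 1 := by rw [map_one]; ring
      rw [this]
      exact natDegree_X_add_C 1
    rw [hdeg, reflect_add, reflect_monomial, reflect_monomial]
    have h1 : revAt 1 1 = 0 := by rw [revAt_le (by norm_num)]
    have h0 : revAt 1 0 = 1 := by rw [revAt_le (by norm_num)]
    rw [h1, h0]
    ring
  induction c with
  | zero =>
    rw [pow_zero, show (1 : (ZMod 2)[X]) = C 1 from (map_one C).symm, Polynomial.reverse_C]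
  | succ c ih => rw [pow_succ, reverse_mul_of_domain, ih, hX1]

lemma even_natDegree_of_selfrecip (g : (ZMod 2)[X]) (hg : g.reverse = g)
    (h1 : g.eval 1 ≠ 0) : Even g.natDegree := by
  by_contra hodd
  rw [Nat.not_even_iff_odd] at hodd
  apply h1
  set s := g.natDegree with hs
  have heval : g.eval 1 = ∑ i ∈ range (s + 1), g.coeff i := by
    rw [eval_eq_sum_range]; simp [hs]
  rw [heval]
  have hsym : ∀ i, i ≤ s → g.coeff i = g.coeff (s - i) := by
    intro i hi
    conv_lhs => rw [← hg]
    rw [coeff_reverse, revAt_le hi]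
  obtain ⟨t, ht⟩ := hodd
  refine Finset.sum_involution (fun i _ => s - i) ?_ ?_ ?_ ?_
  · intro i hi
    show g.coeff i + g.coeff (s - i) = 0
    rw [← hsym i (by simp only [mem_range] at hi; omega)]
    exact CharTwo.add_self_eq_zero _
  · intro i hi _
    simp only [mem_range] at hi
    show s - i ≠ i
    omega
  · intro i hi
    simp only [mem_range] at hi ⊢
    omega
  · intro i hi
    simp only [mem_range] at hi
    show s - (s - i) = i
    omega

lemma odd_natDegree_of_selfrecip (f₁ : (ZMod 2)[X]) (hf : f₁ ≠ 0)
    (hself : f₁.reverse = f₁) (hodd : Odd (rootMultiplicity 1 f₁)) :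
    Odd f₁.natDegree := by
  obtain ⟨g, hg, hndvd⟩ := f₁.exists_eq_pow_rootMultiplicity_mul_and_not_dvd hf 1
  set c := rootMultiplicity 1 f₁ with hc
  have hC1 : (C (1 : ZMod 2)) = 1 := map_one C
  rw [hC1] at hg hndvd
  have hgne : g ≠ 0 := by rintro rfl; rw [mul_zero] at hg; exact hf hg
  have hXne : ((X : (ZMod 2)[X]) - 1) ^ c ≠ 0 := pow_ne_zero _ X_sub_one_ne_zero
  have hgrev : g.reverse = g := by
    have h2 : ((X : (ZMod 2)[X]) - 1) ^ c * g.reverse = ((X : (ZMod 2)[X]) - 1) ^ c * g := by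
      conv_lhs => rw [← reverse_X_sub_one_pow c]
      rw [← reverse_mul_of_domain, ← hg, hself, hg]
    exact mul_left_cancel₀ hXne h2
  have hdeg : f₁.natDegree = c + g.natDegree := by
    rw [hg, natDegree_mul hXne hgne, natDegree_pow]
    have h1 : ((X : (ZMod 2)[X]) - 1).natDegree = 1 := by
      rw [← hC1]; exact natDegree_X_sub_C 1
    rw [h1, mul_one]
  have hg1 : g.eval 1 ≠ 0 := by
    intro h
    apply hndvd
    rw [← hC1]
    exact dvd_iff_isRoot.2 h
  have heven := even_natDegree_of_selfrecip g hgrev hg1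
  rw [hdeg]
  rcases hodd with ⟨t, ht⟩
  rcases heven with ⟨u, hu⟩
  exact ⟨t + u, by omega⟩

lemma dvd_pow_mod (n a : ℕ) : ((X : (ZMod 2)[X]) ^ n - 1) ∣ (X ^ a - X ^ (a % n)) := by
  obtain ⟨w, hw⟩ := sub_dvd_pow_sub_pow ((X : (ZMod 2)[X]) ^ n) 1 (a / n)
  refine ⟨X ^ (a % n) * w, ?_⟩
  have h1 : (X : (ZMod 2)[X]) ^ a = X ^ (a % n) * (X ^ n) ^ (a / n) := by
    rw [← pow_mul, ← pow_add]
    congr 1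
    exact (Nat.mod_add_div a n).symm
  calc (X : (ZMod 2)[X]) ^ a - X ^ (a % n)
      = X ^ (a % n) * ((X ^ n) ^ (a / n) - 1 ^ (a / n)) := by rw [one_pow, mul_sub, mul_one, h1]
    _ = X ^ (a % n) * ((X ^ n - 1) * w) := by rw [hw]
    _ = (X ^ n - 1) * (X ^ (a % n) * w) := by ring

lemma parity_main {n m : ℕ} [NeZero n] (hnm : n = 2 * m) (hm : 0 < m)
    (f₁ : (ZMod 2)[X]) (hdeg : f₁.natDegree < n)
    (b : Fin n → ZMod 2)
    (hbodd : ∀ k : Fin n, ¬ Even k.val → b k = 0)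
    (hid : ∀ j : Fin n, ∑ k : Fin n, b k * f₁.coeff ((j - k : Fin n).val) = 1) :
    Odd (rootMultiplicity 1 f₁) ∧ f₁ ≠ 0 := by
  set u : (ZMod 2)[X] := ∑ k : Fin n, C (b k) * X ^ (k.val) with hu
  set s : (ZMod 2)[X] := ∑ k : Fin n, C (b k) * X ^ (k.val / 2) with hsdef
  set P1 : (ZMod 2)[X] := ∑ i ∈ range n, (X : (ZMod 2)[X]) ^ i with hP1
  -- u = s ^ 2
  have hu_s : u = s ^ 2 := by
    rw [hsdef, sum_pow_char, hu]
    apply Finset.sum_congr rfl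
    intro k _
    by_cases hk : Even k.val
    · rw [mul_pow, ← map_pow, ZMod.pow_card, ← pow_mul]
      congr 2
      obtain ⟨t, ht⟩ := hk
      omega
    · rw [hbodd k hk, map_zero, zero_mul, zero_mul, zero_pow (by norm_num)]
  -- the shifted polynomials
  set Q : Fin n → (ZMod 2)[X] := fun k => ∑ j : Fin n, C (f₁.coeff ((j - k : Fin n).val)) * X ^ (j.val)
    with hQdef
  have hf₁sum : f₁ = ∑ i ∈ range n, C (f₁.coeff i) * X ^ i := by
    conv_lhs => rw [f₁.as_sum_range' n hdeg]
    exact Finset.sum_congr rfl fun i _ => (C_mul_X_pow_eq_monomial).symm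
  have hQ : ∀ k : Fin n, ((X : (ZMod 2)[X]) ^ n - 1) ∣ (f₁ * X ^ (k.val) - Q k) := by
    intro k
    have hQk : Q k = ∑ i : Fin n, C (f₁.coeff i.val) * X ^ ((i + k : Fin n).val) := by
      rw [hQdef]
      refine (Equiv.sum_comp (Equiv.addRight k) _).symm.trans ?_
      apply Finset.sum_congr rfl
      intro i _
      simp only [Equiv.coe_addRight, add_sub_cancel_right]
    have hfX : f₁ * X ^ (k.val) = ∑ i : Fin n, C (f₁.coeff i.val) * X ^ (i.val + k.val) := by
      conv_lhs => rw [hf₁sum]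
      rw [Finset.sum_mul,
        ← Fin.sum_univ_eq_sum_range (fun i => C (f₁.coeff i) * X ^ i * X ^ (k.val)) n]
      apply Finset.sum_congr rfl
      intro i _
      rw [mul_assoc, ← pow_add]
    rw [hfX, hQk, ← Finset.sum_sub_distrib]
    apply Finset.dvd_sum
    intro i _
    have : C (f₁.coeff i.val) * X ^ (i.val + k.val) - C (f₁.coeff i.val) * X ^ ((i + k : Fin n).val)
        = C (f₁.coeff i.val) * (X ^ (i.val + k.val) - X ^ ((i.val + k.val) % n)) := by
      rw [Fin.val_add]
      ring
    rw [this]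
    exact Dvd.dvd.mul_left (dvd_pow_mod n _) _
  -- sum of b_k Q k = P1
  have hQP : ∑ k : Fin n, C (b k) * Q k = P1 := by
    have step1 : ∀ k : Fin n, C (b k) * Q k
        = ∑ j : Fin n, C (b k) * (C (f₁.coeff ((j - k : Fin n).val)) * X ^ (j.val)) := by
      intro k
      rw [hQdef]
      exact Finset.mul_sum _ _ _
    rw [Finset.sum_congr rfl fun k _ => step1 k, Finset.sum_comm, hP1,
      ← Fin.sum_univ_eq_sum_range (fun i => (X : (ZMod 2)[X]) ^ i) n]
    apply Finset.sum_congr rfl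
    intro j _
    have step2 : ∀ k : Fin n, C (b k) * (C (f₁.coeff ((j - k : Fin n).val)) * X ^ (j.val))
        = C (b k * f₁.coeff ((j - k : Fin n).val)) * X ^ (j.val) := by
      intro k
      rw [map_mul, mul_assoc]
    rw [Finset.sum_congr rfl fun k _ => step2 k, ← Finset.sum_mul, ← map_sum, hid j, map_one,
      one_mul]
  -- divisibility
  have hdvd2 : ((X : (ZMod 2)[X]) ^ n - 1) ∣ (f₁ * u - P1) := by
    have expand : f₁ * u - P1 = ∑ k : Fin n, C (b k) * (f₁ * X ^ (k.val) - Q k) := by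
      have h1 : f₁ * u = ∑ k : Fin n, C (b k) * (f₁ * X ^ (k.val)) := by
        rw [hu, Finset.mul_sum]
        exact Finset.sum_congr rfl fun k _ => by ring
      calc f₁ * u - P1 = (∑ k : Fin n, C (b k) * (f₁ * X ^ (k.val)))
            - ∑ k : Fin n, C (b k) * Q k := by rw [← h1, hQP]
        _ = ∑ k : Fin n, (C (b k) * (f₁ * X ^ (k.val)) - C (b k) * Q k) :=
            (Finset.sum_sub_distrib _ _).symm
        _ = ∑ k : Fin n, C (b k) * (f₁ * X ^ (k.val) - Q k) :=
            Finset.sum_congr rfl fun k _ => by ring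
    rw [expand]
    exact Finset.dvd_sum fun k _ => Dvd.dvd.mul_left (hQ k) _
  obtain ⟨W, hW⟩ := hdvd2
  have hgeom : P1 * ((X : (ZMod 2)[X]) - 1) = X ^ n - 1 := geom_sum_mul X n
  have hsq : ((X : (ZMod 2)[X]) ^ m - 1) ^ 2 = X ^ n - 1 := by
    rw [hnm]
    linear_combination (1 - (X : (ZMod 2)[X]) ^ m) * two_eq_zero_poly
  have key : ((X : (ZMod 2)[X]) ^ m - 1) ^ 2 * (1 + W * (X - 1))
      = (X - 1) * (f₁ * s ^ 2) := by
    linear_combination (1 + W * ((X : (ZMod 2)[X]) - 1)) * hsq - ((X : (ZMod 2)[X]) - 1) * hW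
      + (((X : (ZMod 2)[X]) - 1) * f₁) * hu_s - hgeom
  -- nonvanishing
  have hXm : ((X : (ZMod 2)[X]) ^ m - 1) ≠ 0 := by
    intro h
    have h0 : (((X : (ZMod 2)[X]) ^ m - 1)).eval 0 = 0 := by rw [h]; simp
    rw [eval_sub, eval_pow, eval_X, eval_one, zero_pow hm.ne', zero_sub] at h0
    exact one_ne_zero (neg_eq_zero.mp h0)
  have hq : (1 + W * ((X : (ZMod 2)[X]) - 1)) ≠ 0 := by
    intro h
    have h0 : ((1 : (ZMod 2)[X]) + W * (X - 1)).eval 1 = 0 := by rw [h]; simp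
    simp at h0
  have hLne : ((X : (ZMod 2)[X]) ^ m - 1) ^ 2 * (1 + W * (X - 1)) ≠ 0 :=
    mul_ne_zero (pow_ne_zero _ hXm) hq
  have hRne : ((X : (ZMod 2)[X]) - 1) * (f₁ * s ^ 2) ≠ 0 := key ▸ hLne
  have hX1ne : ((X : (ZMod 2)[X]) - 1) ≠ 0 := fun h => hRne (by rw [h, zero_mul])
  have hfs : f₁ * s ^ 2 ≠ 0 := fun h => hRne (by rw [h, mul_zero])
  have hf₁ne : f₁ ≠ 0 := fun h => hfs (by rw [h, zero_mul])
  have hsne : s ≠ 0 := fun h => hfs (by rw [h]; ring)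
  -- root multiplicities
  have hrmL : rootMultiplicity 1 (((X : (ZMod 2)[X]) ^ m - 1) ^ 2 * (1 + W * (X - 1)))
      = 2 * rootMultiplicity 1 ((X : (ZMod 2)[X]) ^ m - 1) := by
    rw [rootMultiplicity_mul hLne]
    have h1 : rootMultiplicity 1 (1 + W * ((X : (ZMod 2)[X]) - 1)) = 0 := by
      apply rootMultiplicity_eq_zero
      intro h
      rw [IsRoot.def] at h
      simp at h
    rw [h1, add_zero, sq, rootMultiplicity_mul (mul_ne_zero hXm hXm)]
    omega
  have hrmR : rootMultiplicity 1 (((X : (ZMod 2)[X]) - 1) * (f₁ * s ^ 2))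
      = 1 + (rootMultiplicity 1 f₁ + 2 * rootMultiplicity 1 s) := by
    rw [rootMultiplicity_mul hRne, rootMultiplicity_mul hfs]
    have hX1 : rootMultiplicity 1 ((X : (ZMod 2)[X]) - 1)
        = 1 := by
      have : ((X : (ZMod 2)[X]) - 1) = X - C 1 := by rw [map_one]
      rw [this]
      exact rootMultiplicity_X_sub_C_self
    rw [hX1, sq, rootMultiplicity_mul (mul_ne_zero hsne hsne)]
    omega
  have heq : 2 * rootMultiplicity 1 ((X : (ZMod 2)[X]) ^ m - 1)
      = 1 + (rootMultiplicity 1 f₁ + 2 * rootMultiplicity 1 s) := by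
    rw [← hrmL, ← hrmR, key]
  refine ⟨Nat.odd_iff.mpr ?_, hf₁ne⟩
  omega

lemma theta_mul (a b : Rt) : theta (a * b) = theta a * theta b := rfl
lemma theta_theta (a : Rt) : theta (theta a) = a := rfl

lemma theta_iterate (k : ℕ) (a : Rt) : theta^[k] a = if Even k then a else theta a := by
  induction k with
  | zero => simp
  | succ k ih =>
    rw [Function.iterate_succ_apply', ih]
    rcases Nat.even_or_odd k with h | h
    · simp [h, Nat.even_add_one, Nat.not_even_iff_odd, Nat.odd_iff, Nat.even_iff.1 h]
    · simp [Nat.not_even_iff_odd.2 h, Nat.even_add_one, Nat.not_even_iff_odd.2 h, theta_theta]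

section FinN
variable {n : ℕ} [NeZero n]

lemma sshift_apply (c : Fin n → Rt) (j : Fin n) : sshift c j = theta (c (j - 1)) := by
  unfold sshift
  congr 1
  apply congrArg
  apply Fin.ext
  rw [Fin.sub_def]
  simp only []
  have h1 : (1 : Fin n).val = 1 % n := Fin.val_one' n
  have hn : 0 < n := Nat.pos_of_ne_zero (NeZero.ne n)
  rw [h1]
  rcases Nat.lt_or_ge 1 n with h | h
  · rw [Nat.mod_eq_of_lt h, Nat.add_comm]
  · interval_cases n
    simp [Nat.mod_one]


lemma sshift_iterate (k : ℕ) (c : Fin n → Rt) (j : Fin n) :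
    sshift^[k] c j = theta^[k] (c (j - (k : Fin n))) := by
  induction k generalizing j with
  | zero => simp
  | succ k ih =>
    rw [Function.iterate_succ_apply', sshift_apply, ih, ← Function.iterate_succ_apply' theta]
    congr 2
    push_cast
    ring

lemma sshift_smul (a : Rt) (c : Fin n → Rt) : sshift (a • c) = theta a • sshift c := by
  funext j
  simp only [sshift, Pi.smul_apply, smul_eq_mul]
  rfl

lemma sshift_add (c d : Fin n → Rt) : sshift (c + d) = sshift c + sshift d := by
  funext j; simp only [sshift, Pi.add_apply]; unfold theta; simp

lemma sshift_zero : sshift (0 : Fin n → Rt) = 0 := by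
  funext j; simp only [sshift, Pi.zero_apply]; rfl

lemma sshift_iterate_n (hn : Even n) (c : Fin n → Rt) : sshift^[n] c = c := by
  funext j
  rw [sshift_iterate, theta_iterate, if_pos hn]
  congr 1
  simp

lemma sshift_mem (hn : Even n) {f x : Fin n → Rt} (hx : x ∈ skewSpan f) :
    sshift x ∈ skewSpan f := by
  induction hx using Submodule.span_induction with
  | mem x hx =>
    obtain ⟨k, rfl⟩ := hx
    have hiter : sshift (sshift^[k.val] f) = sshift^[k.val + 1] f :=
      (Function.iterate_succ_apply' sshift k.val f).symm
    rcases Nat.lt_or_ge (k.val + 1) n with h | h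
    · rw [hiter]
      exact Submodule.subset_span ⟨⟨k.val + 1, h⟩, rfl⟩
    · have hk : k.val + 1 = n := by omega
      rw [hiter, hk, sshift_iterate_n hn]
      exact Submodule.subset_span ⟨⟨0, Nat.pos_of_ne_zero (NeZero.ne n)⟩, by simp⟩
  | zero => rw [sshift_zero]; exact Submodule.zero_mem _
  | add x y _ _ hx hy => rw [sshift_add]; exact Submodule.add_mem _ hx hy
  | smul a x _ hx => rw [sshift_smul]; exact Submodule.smul_mem _ _ hx

lemma sshift_iterate_mem (hn : Even n) {f x : Fin n → Rt} (hx : x ∈ skewSpan f) (k : ℕ) :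
    sshift^[k] x ∈ skewSpan f := by
  induction k with
  | zero => exact hx
  | succ k ih => rw [Function.iterate_succ_apply']; exact sshift_mem hn ih

def revv {n : ℕ} (c : Fin n → Rt) : Fin n → Rt := fun j => c j.rev

lemma last_eq_neg_one {m : ℕ} : (Fin.last m) = (-1 : Fin (m + 1)) := by
  have h := Fin.neg_last m
  linear_combination (norm := ring_nf) -h

lemma rev_eq_neg (j : Fin n) : j.rev = -(j + 1) := by
  rcases Nat.exists_eq_succ_of_ne_zero (NeZero.ne n) with ⟨m, rfl⟩
  rw [← Fin.last_sub, last_eq_neg_one]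
  ring

lemma revv_sshift (hn : Even n) (c : Fin n → Rt) :
    revv (sshift c) = sshift^[n - 1] (revv c) := by
  funext j
  have hn1 : 1 < n := by
    have : 0 < n := Nat.pos_of_ne_zero (NeZero.ne n)
    rcases hn with ⟨m, rfl⟩; omega
  rw [sshift_iterate, theta_iterate, if_neg ?_, revv, revv, sshift_apply]
  · congr 2
    rw [rev_eq_neg, rev_eq_neg]
    have hcast : ((n - 1 : ℕ) : Fin n) = -1 := by
      rcases Nat.exists_eq_succ_of_ne_zero (NeZero.ne n) with ⟨m, rfl⟩
      simp only [Nat.succ_sub_one, Fin.natCast_eq_last]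
      exact last_eq_neg_one
    rw [hcast]
    ring
  · rcases hn with ⟨m, rfl⟩
    simp only [Nat.not_even_iff_odd]
    refine ⟨m - 1, by omega⟩

lemma revv_add (c d : Fin n → Rt) : revv (c + d) = revv c + revv d := rfl
lemma revv_smul (a : Rt) (c : Fin n → Rt) : revv (a • c) = a • revv c := rfl

lemma revv_mem (hn : Even n) {f : Fin n → Rt} (hf : revv f ∈ skewSpan f)
    {x : Fin n → Rt} (hx : x ∈ skewSpan f) : revv x ∈ skewSpan f := by
  induction hx using Submodule.span_induction with
  | mem x hx =>
    obtain ⟨k, rfl⟩ := hx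
    have : ∀ m : ℕ, ∀ y : Fin n → Rt, revv y ∈ skewSpan f → revv (sshift^[m] y) ∈ skewSpan f := by
      intro m
      induction m with
      | zero => intro y hy; exact hy
      | succ m ih =>
        intro y hy
        rw [Function.iterate_succ_apply', revv_sshift hn]
        exact sshift_iterate_mem hn (ih y hy) _
    exact this k.val f hf
  | zero =>
    have : revv (0 : Fin n → Rt) = 0 := rfl
    rw [this]; exact Submodule.zero_mem _
  | add x y _ _ hx hy => rw [revv_add]; exact Submodule.add_mem _ hx hy
  | smul a x _ hx => rw [revv_smul]; exact Submodule.smul_mem _ _ hx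


end FinN

/-- let `n` be even, `f₁ ∈ F₂[x]` monic of degree `r < n` dividing `xⁿ - 1`,
and let `C` be the skew cyclic code generated by `v·f₁`.  If the constant vector
`(v, …, v)` belongs to `C` and `f₁` is self-reciprocal, then `C` is reverse-complement. -/
theorem skew_reverseComplement_of_selfReciprocal_v (n : ℕ) (hn : Even n)
    (f₁ : (ZMod 2)[X]) (hmonic : f₁.Monic) (hdeg : f₁.natDegree < n)
    (hdvd : f₁ ∣ X ^ n - 1)
    (hv : (fun _ : Fin n => vv) ∈ skewSpan (vPoly n f₁))
    (hself : f₁.reverse = f₁) :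
    ∀ c ∈ skewSpan (vPoly n f₁), rcomp c ∈ skewSpan (vPoly n f₁) := by
  have hn0 : 0 < n := lt_of_le_of_lt (Nat.zero_le _) hdeg
  haveI : NeZero n := ⟨hn0.ne'⟩
  obtain ⟨m, hm'⟩ := hn
  have hnm : n = 2 * m := by omega
  have hm : 0 < m := by omega
  set r := f₁.natDegree with hr
  set f : Fin n → Rt := vPoly n f₁ with hf
  have hf_apply : ∀ j : Fin n, f j = (f₁.coeff j.val, 0) := by
    intro j
    rw [hf]
    unfold vPoly
    rw [Prod.algebraMap_apply]
    apply Prod.ext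
    · rw [Prod.fst_mul]; show (1 : ZMod 2) * _ = _; rw [one_mul]; rfl
    · rw [Prod.snd_mul]; show (0 : ZMod 2) * _ = _; rw [zero_mul]
  have hshift_apply : ∀ (k : Fin n) (j : Fin n),
      sshift^[k.val] f j = if Even k.val then ((f₁.coeff ((j - k : Fin n).val), 0) : Rt)
        else ((0, f₁.coeff ((j - k : Fin n).val)) : Rt) := by
    intro k j
    rw [sshift_iterate, Fin.cast_val_eq_self, hf_apply, theta_iterate]
    by_cases hk : Even k.val
    · rw [if_pos hk, if_pos hk]
    · rw [if_neg hk, if_neg hk]; rfl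
  -- extract coefficients
  rw [skewSpan, Submodule.mem_span_range_iff_exists_fun] at hv
  obtain ⟨a, ha⟩ := hv
  set b : Fin n → ZMod 2 := fun k => if Even k.val then (a k).1 else 0 with hb
  have hbodd : ∀ k : Fin n, ¬ Even k.val → b k = 0 := by
    intro k hk; rw [hb]; exact if_neg hk
  have hid : ∀ j : Fin n, ∑ k : Fin n, b k * f₁.coeff ((j - k : Fin n).val) = 1 := by
    intro j
    have hj := congrFun ha j
    rw [Finset.sum_apply] at hj
    have hj1 := congrArg Prod.fst hj
    rw [Prod.fst_sum] at hj1
    have hterm : ∀ k : Fin n, ((a k • sshift^[k.val] f) j).1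
        = b k * f₁.coeff ((j - k : Fin n).val) := by
      intro k
      rw [Pi.smul_apply, smul_eq_mul, Prod.fst_mul, hshift_apply]
      by_cases hk : Even k.val
      · simp only [hb, if_pos hk]
      · simp only [hb, if_neg hk]
        show (a k).1 * 0 = 0 * _
        rw [mul_zero, zero_mul]
    rw [Finset.sum_congr rfl fun k _ => hterm k] at hj1
    exact hj1
  have hv' : (fun _ : Fin n => vv) ∈ skewSpan f := by
    rw [skewSpan, Submodule.mem_span_range_iff_exists_fun]
    exact ⟨a, ha⟩
  -- parity
  obtain ⟨hoddrm, hf₁ne⟩ := parity_main hnm hm f₁ hdeg b hbodd hid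
  have hroddr : Odd r := odd_natDegree_of_selfrecip f₁ hf₁ne hself hoddrm
  -- reverse of f is a generator
  have hcoeffsym : ∀ i, i ≤ r → f₁.coeff i = f₁.coeff (r - i) := by
    intro i hi
    conv_lhs => rw [← hself]
    rw [coeff_reverse, revAt_le hi]
  have heven : Even (n - 1 - r) := by
    obtain ⟨t, ht⟩ := hroddr
    refine ⟨m - t - 1, by omega⟩
  have hrltn : r < n := hdeg
  have hrev : revv f = sshift^[n - 1 - r] f := by
    funext j
    rw [sshift_iterate, theta_iterate, if_pos heven]
    show f j.rev = f (j - ((n - 1 - r : ℕ) : Fin n))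
    rw [hf_apply, hf_apply]
    have hc : ((n - 1 - r : ℕ) : Fin n).val = n - 1 - r := by
      rw [Fin.val_natCast]
      exact Nat.mod_eq_of_lt (by omega)
    have hsub : (j - ((n - 1 - r : ℕ) : Fin n)).val = (j.val + (r + 1)) % n := by
      rw [Fin.sub_def]
      simp only [hc]
      congr 1
      omega
    rw [Fin.val_rev, hsub]
    congr 1
    have hjv : j.val < n := j.isLt
    rcases Nat.lt_or_ge j.val (n - 1 - r) with hcase | hcase
    · -- both coefficients are zero
      have h1 : f₁.coeff (n - (j.val + 1)) = 0 := coeff_eq_zero_of_natDegree_lt (by omega)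
      have hmod : (j.val + (r + 1)) % n = j.val + (r + 1) := Nat.mod_eq_of_lt (by omega)
      rw [h1, hmod]
      exact (coeff_eq_zero_of_natDegree_lt (by omega)).symm
    · have hi : n - (j.val + 1) ≤ r := by omega
      have hmod : (j.val + (r + 1)) % n = j.val + (r + 1) - n := by
        rw [Nat.mod_eq_sub_mod (by omega)]
        exact Nat.mod_eq_of_lt (by omega)
      rw [hmod, hcoeffsym _ hi]
      congr 1
      omega
  have hgen : revv f ∈ skewSpan f := by
    rw [hrev]
    exact Submodule.subset_span ⟨⟨n - 1 - r, by omega⟩, rfl⟩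
  intro c hc
  have hrc : rcomp c = revv c + (fun _ : Fin n => vv) := funext fun j => rfl
  rw [hrc]
  exact Submodule.add_mem _ (revv_mem ⟨m, hm'⟩ hgen hc) hv'
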